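/- Let Φ(t) = eᵗ − 1 and let φ(t) = t·log(e²/t) for 0 < t ≤ 1. There is an absolute constant C ≥ 1 such that for every measurable function y on (0,1), C⁻¹ ‖y‖_{L_Φ(0,1)} ≤ sup_{0<t≤1} (1/φ(t)) ∫_0^t μ(s,y) ds ≤ C ‖y‖_{L_Φ(0,1)}, where both sides take values in [0,∞]. In other words, the Marcinkiewicz space M_φ(0,1) coincides with the Orlicz space L_Φ(0,1) with equivalent norms. -/

import Mathlib

open MeasureTheory ENNReal Set

/-- The decreasing rearrangement `μ(t, f)`. -/
noncomputable def mu {X : Type*} [MeasurableSpace X] (ν : Measure X) (f : X → ℝ) (t : ℝ) : ℝ≥0∞ :=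
  sInf (ENNReal.ofReal '' {s : ℝ | 0 ≤ s ∧ ν {u | s < |f u|} ≤ ENNReal.ofReal t})

/-- Luxemburg norm for `Φ(t) = eᵗ - 1` on `(0,1)`:
`‖y‖ = inf {λ > 0 : ∫_0^1 (exp(|y(s)|/λ) - 1) ds ≤ 1}`, with `inf ∅ = ∞`. -/
noncomputable def expOrliczNorm (y : ℝ → ℝ) : ℝ≥0∞ :=
  sInf (ENNReal.ofReal ''
    {l : ℝ | 0 < l ∧ (∫⁻ s in Ioo (0:ℝ) 1, ENNReal.ofReal (Real.exp (|y s| / l) - 1)) ≤ 1})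

lemma stmt6_mu_antitone {X : Type*} [MeasurableSpace X] (ν : Measure X) (f : X → ℝ) :
    Antitone (mu ν f) := by
  intro t1 t2 h
  exact sInf_le_sInf (image_mono fun s hs => ⟨hs.1, hs.2.trans (ENNReal.ofReal_le_ofReal h)⟩)

lemma stmt6_mu_le_of_meas_le {X : Type*} [MeasurableSpace X] {ν : Measure X} {f : X → ℝ}
    {t a : ℝ} (ha : 0 ≤ a) (h : ν {u | a < |f u|} ≤ ENNReal.ofReal t) :
    mu ν f t ≤ ENNReal.ofReal a :=
  sInf_le ⟨a, ⟨ha, h⟩, rfl⟩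

lemma stmt6_meas_le_of_mu_lt {X : Type*} [MeasurableSpace X] {ν : Measure X} {f : X → ℝ}
    {t a : ℝ} (h : mu ν f t < ENNReal.ofReal a) :
    ν {u | a < |f u|} ≤ ENNReal.ofReal t := by
  obtain ⟨b, hb, hba⟩ := sInf_lt_iff.1 h
  obtain ⟨s, ⟨hs0, hsm⟩, rfl⟩ := hb
  have hsa : s < a := by
    by_contra hc
    push_neg at hc
    exact absurd (ENNReal.ofReal_le_ofReal hc) (not_le.2 hba)
  exact le_trans (measure_mono fun u hu => hsa.trans hu) hsm

lemma stmt6_cheb {y : ℝ → ℝ} (hy : Measurable y) {l : ℝ} (hl : 0 < l)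
    (hint : (∫⁻ s in Ioo (0:ℝ) 1, ENNReal.ofReal (Real.exp (|y s| / l) - 1)) ≤ 1)
    {s : ℝ} (hs : 0 < s) :
    (volume.restrict (Ioo (0:ℝ) 1)) {u | l * Real.log (1 + 1/s) < |y u|}
      ≤ ENNReal.ofReal s := by
  set ν := volume.restrict (Ioo (0:ℝ) 1)
  have h1s : (0:ℝ) < 1 + 1/s := by positivity
  have key : {u | l * Real.log (1 + 1/s) < |y u|} ⊆
      {u | ENNReal.ofReal (1/s) ≤ ENNReal.ofReal (Real.exp (|y u| / l) - 1)} := by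
    intro u hu
    simp only [mem_setOf_eq] at hu ⊢
    apply ENNReal.ofReal_le_ofReal
    have h1 : Real.log (1 + 1/s) < |y u| / l := by
      rw [lt_div_iff₀ hl]; linarith [hu]
    have h2 := Real.exp_lt_exp.2 h1
    rw [Real.exp_log h1s] at h2
    linarith
  have cheb := mul_meas_ge_le_lintegral₀ (μ := ν)
    (f := fun u => ENNReal.ofReal (Real.exp (|y u| / l) - 1))
    (by fun_prop) (ENNReal.ofReal (1/s))
  have h2 : ENNReal.ofReal (1/s) * ν {u | l * Real.log (1 + 1/s) < |y u|} ≤ 1 :=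
    le_trans (mul_le_mul_right (measure_mono key) _) (cheb.trans hint)
  have hof : ENNReal.ofReal (1/s) = (ENNReal.ofReal s)⁻¹ := by
    rw [one_div, ENNReal.ofReal_inv_of_pos hs]
  rw [hof] at h2
  calc ν {u | l * Real.log (1 + 1/s) < |y u|}
      = ENNReal.ofReal s * ((ENNReal.ofReal s)⁻¹ * ν _) := by
        rw [← mul_assoc, ENNReal.mul_inv_cancel (by simpa using hs) ofReal_ne_top, one_mul]
    _ ≤ ENNReal.ofReal s * 1 := mul_le_mul_right h2 _
    _ = ENNReal.ofReal s := mul_one _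

lemma stmt6_lint_union {g : ℝ → ℝ≥0∞} (hg : Measurable g) {A : ℕ → Set ℝ}
    (hA : ∀ n, MeasurableSet (A n)) (hmono : Monotone A) :
    ∫⁻ s in ⋃ n, A n, g s = ⨆ n, ∫⁻ s in A n, g s := by
  rw [← lintegral_indicator (MeasurableSet.iUnion hA)]
  have h1 : ∀ x, (⋃ n, A n).indicator g x = ⨆ n, (A n).indicator g x := by
    intro x
    by_cases hx : x ∈ ⋃ n, A n
    · obtain ⟨n, hn⟩ := mem_iUnion.1 hx
      rw [indicator_of_mem hx]
      refine le_antisymm (le_iSup_of_le n (by rw [indicator_of_mem hn])) ?_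
      exact iSup_le fun m => indicator_le_self _ _ x
    · rw [indicator_of_notMem hx]
      have : ∀ n, (A n).indicator g x = 0 := fun n =>
        indicator_of_notMem (fun h => hx (mem_iUnion.2 ⟨n, h⟩)) _
      simp [this]
  calc ∫⁻ x, (⋃ n, A n).indicator g x
      = ∫⁻ x, ⨆ n, (A n).indicator g x := lintegral_congr h1
    _ = ⨆ n, ∫⁻ x, (A n).indicator g x :=
        lintegral_iSup (fun n => hg.indicator (hA n))
          (fun m n h => indicator_le_indicator_of_subset (hmono h) (fun _ => zero_le))
    _ = ⨆ n, ∫⁻ x in A n, g x := by simp [lintegral_indicator, hA]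

lemma stmt6_piece_est {t l ε : ℝ} (ht0 : 0 < t) (ht1 : t ≤ 1) (hl : 0 < l)
    (hε : 0 < ε) (hεt : ε ≤ t) :
    ∫⁻ s in Ioc ε t, ENNReal.ofReal (l * Real.log (2/s)) ≤
      ENNReal.ofReal l * ENNReal.ofReal (t * Real.log (Real.exp 2 / t)) := by
  have h0 : (0:ℝ) ∉ uIcc ε t := by
    rw [uIcc_of_le hεt]; exact fun h => absurd h.1 (not_le.2 hε)
  have hcont : ContinuousOn (fun s : ℝ => l * Real.log (2/s)) (uIcc ε t) := by
    rw [uIcc_of_le hεt]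
    refine continuousOn_const.mul (Real.continuousOn_log.comp
      (continuousOn_const.div continuousOn_id fun x hx => ne_of_gt (lt_of_lt_of_le hε hx.1)) ?_)
    intro x hx
    exact ne_of_gt (div_pos two_pos (hε.trans_le hx.1))
  have hii : IntervalIntegrable (fun s : ℝ => l * Real.log (2/s)) volume ε t :=
    hcont.intervalIntegrable
  have hfi : IntegrableOn (fun s : ℝ => l * Real.log (2/s)) (Ioc ε t) volume :=
    (intervalIntegrable_iff_integrableOn_Ioc_of_le hεt).1 hii
  have hnn : 0 ≤ᵐ[volume.restrict (Ioc ε t)] fun s : ℝ => l * Real.log (2/s) := by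
    have h := ae_restrict_mem (μ := volume) (s := Ioc ε t) measurableSet_Ioc
    filter_upwards [h] with x hx
    have hx0 : 0 < x := hε.trans_le hx.1.le
    have h1 : (1:ℝ) ≤ 2/x := by
      rw [le_div_iff₀ hx0]; linarith [hx.2.trans ht1]
    exact mul_nonneg hl.le (Real.log_nonneg h1)
  rw [← ofReal_integral_eq_lintegral_ofReal hfi hnn]
  have hval : ∫ s in Ioc ε t, l * Real.log (2/s) =
      l * ((t - ε) * Real.log 2 - (t * Real.log t - ε * Real.log ε - t + ε)) := by
    rw [← intervalIntegral.integral_of_le hεt, intervalIntegral.integral_const_mul]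
    congr 1
    have heq : EqOn (fun s : ℝ => Real.log (2/s)) (fun s => Real.log 2 - Real.log s)
        (uIcc ε t) := by
      intro x hx
      rw [uIcc_of_le hεt] at hx
      exact Real.log_div two_ne_zero (ne_of_gt (lt_of_lt_of_le hε hx.1))
    rw [intervalIntegral.integral_congr heq,
      intervalIntegral.integral_sub intervalIntegrable_const
        (_root_.intervalIntegral.intervalIntegrable_log h0),
      intervalIntegral.integral_const, integral_log]
    simp [smul_eq_mul]
  rw [hval, ← ENNReal.ofReal_mul hl.le]
  apply ENNReal.ofReal_le_ofReal
  apply mul_le_mul_of_nonneg_left _ hl.le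
  have hlog : Real.log (Real.exp 2 / t) = 2 - Real.log t := by
    rw [Real.log_div (Real.exp_ne_zero 2) (ne_of_gt ht0), Real.log_exp]
  rw [hlog]
  have h2 : Real.log 2 ≤ 1 := by
    have := Real.add_one_le_exp (1:ℝ)
    have h2e : (2:ℝ) ≤ Real.exp 1 := by linarith
    calc Real.log 2 ≤ Real.log (Real.exp 1) := Real.log_le_log (by norm_num) h2e
      _ = 1 := Real.log_exp 1
  have hεlog : ε * Real.log ε ≤ 0 :=
    mul_nonpos_of_nonneg_of_nonpos hε.le (Real.log_nonpos hε.le (hεt.trans ht1))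
  have hεlog2 : 0 ≤ ε * Real.log 2 := mul_nonneg hε.le (Real.log_nonneg one_le_two)
  nlinarith [mul_le_mul_of_nonneg_left h2 ht0.le]

lemma stmt6_tail_piece {n : ℕ} :
    ∫⁻ u in Ioc (0:ℝ) n, ENNReal.ofReal (Real.exp 2 * (1+u) ^ (-16:ℝ)) ≤ 1 := by
  have hn : (0:ℝ) ≤ n := Nat.cast_nonneg n
  have hcont : ContinuousOn (fun u : ℝ => Real.exp 2 * (1+u) ^ (-16:ℝ)) (uIcc 0 n) := by
    rw [uIcc_of_le hn]
    refine continuousOn_const.mul (ContinuousOn.rpow_const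
      ((continuous_const.add continuous_id).continuousOn) fun x hx => Or.inl ?_)
    have : (0:ℝ) ≤ x := hx.1
    positivity
  have hfi : IntegrableOn (fun u : ℝ => Real.exp 2 * (1+u) ^ (-16:ℝ)) (Ioc 0 n) volume :=
    (intervalIntegrable_iff_integrableOn_Ioc_of_le hn).1 hcont.intervalIntegrable
  have hnn : 0 ≤ᵐ[volume.restrict (Ioc (0:ℝ) n)]
      fun u : ℝ => Real.exp 2 * (1+u) ^ (-16:ℝ) := by
    filter_upwards [ae_restrict_mem measurableSet_Ioc] with x hx
    have : (0:ℝ) < x := hx.1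
    positivity
  rw [← ofReal_integral_eq_lintegral_ofReal hfi hnn]
  have hval : ∫ u in Ioc (0:ℝ) n, Real.exp 2 * (1+u) ^ (-16:ℝ) =
      Real.exp 2 * ((1 - (1+(n:ℝ)) ^ (-15:ℝ)) / 15) := by
    rw [← intervalIntegral.integral_of_le hn, intervalIntegral.integral_const_mul]
    congr 1
    have h := intervalIntegral.integral_comp_add_left (a := (0:ℝ)) (b := (n:ℝ))
      (fun v : ℝ => v ^ (-16:ℝ)) 1
    rw [h]
    have h0 : (0:ℝ) ∉ uIcc ((1:ℝ)+0) (1+(n:ℝ)) := by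
      rw [uIcc_of_le (by linarith)]
      intro hmem
      linarith [hmem.1]
    rw [integral_rpow (Or.inr ⟨by norm_num, h0⟩)]
    norm_num [Real.one_rpow]
    ring
  rw [hval]
  have he : Real.exp 2 < 15 := by
    have h1 : Real.exp 1 < 2.7182818286 := Real.exp_one_lt_d9
    have h2 : Real.exp 2 = Real.exp 1 * Real.exp 1 := by
      rw [← Real.exp_add]; norm_num
    nlinarith [Real.exp_pos 1]
  have hp : (0:ℝ) ≤ (1+(n:ℝ)) ^ (-15:ℝ) := Real.rpow_nonneg (by linarith) _
  calc ENNReal.ofReal (Real.exp 2 * ((1 - (1+(n:ℝ)) ^ (-15:ℝ)) / 15))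
      ≤ ENNReal.ofReal 1 := by
        apply ENNReal.ofReal_le_ofReal
        nlinarith [Real.exp_pos 2]
    _ = 1 := ENNReal.ofReal_one

/-- The Marcinkiewicz space `M_φ(0,1)` with `φ(t) = t log(e²/t)` coincides with the Orlicz
space `L_Φ(0,1)`, `Φ(t) = eᵗ - 1`: there is `C ≥ 1` such that for every measurable `y` on
`(0,1)`, `C⁻¹ ‖y‖_{L_Φ} ≤ sup_{0 < t ≤ 1} (1/φ(t)) ∫_0^t μ(s,y) ds ≤ C ‖y‖_{L_Φ}`. -/
theorem stmt_6 :
    ∃ C : ℝ≥0∞, 1 ≤ C ∧ C ≠ ⊤ ∧ ∀ y : ℝ → ℝ, Measurable y →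
      C⁻¹ * expOrliczNorm y ≤
        (⨆ (t : ℝ) (_ : 0 < t) (_ : t ≤ 1),
          (∫⁻ s in Ioc (0:ℝ) t, mu (volume.restrict (Ioo 0 1)) y s) /
            ENNReal.ofReal (t * Real.log (Real.exp 2 / t))) ∧
      (⨆ (t : ℝ) (_ : 0 < t) (_ : t ≤ 1),
          (∫⁻ s in Ioc (0:ℝ) t, mu (volume.restrict (Ioo 0 1)) y s) /
            ENNReal.ofReal (t * Real.log (Real.exp 2 / t))) ≤
        C * expOrliczNorm y := by
  refine ⟨16, by norm_num, by norm_num, fun y hy => ?_⟩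
  set S := (⨆ (t : ℝ) (_ : 0 < t) (_ : t ≤ 1),
      (∫⁻ s in Ioc (0:ℝ) t, mu (volume.restrict (Ioo 0 1)) y s) /
        ENNReal.ofReal (t * Real.log (Real.exp 2 / t))) with hSdef
  have hφ : ∀ t : ℝ, 0 < t → t ≤ 1 → 0 < t * Real.log (Real.exp 2 / t) := by
    intro t ht0 ht1
    have hlog : Real.log (Real.exp 2 / t) = 2 - Real.log t := by
      rw [Real.log_div (Real.exp_ne_zero 2) (ne_of_gt ht0), Real.log_exp]
    have := Real.log_nonpos ht0.le ht1
    rw [hlog]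
    nlinarith
  have hmono := stmt6_mu_antitone (volume.restrict (Ioo (0:ℝ) 1)) y
  -- Upper bound: S ≤ expOrliczNorm y
  have hSN : S ≤ expOrliczNorm y := by
    rw [expOrliczNorm]
    apply le_sInf
    rintro b ⟨l, ⟨hl, hint⟩, rfl⟩
    rw [hSdef]
    refine iSup_le fun t => iSup_le fun ht0 => iSup_le fun ht1 => ?_
    rw [ENNReal.div_le_iff (ne_of_gt (ofReal_pos.2 (hφ t ht0 ht1))) ofReal_ne_top]
    have hUn : (⋃ n : ℕ, Ioc (t/(n+2)) t) = Ioc 0 t := by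
      ext s
      simp only [mem_iUnion, mem_Ioc]
      constructor
      · rintro ⟨n, h1, h2⟩
        have hd : 0 < t/((n:ℝ)+2) := by positivity
        exact ⟨hd.trans h1, h2⟩
      · rintro ⟨h1, h2⟩
        obtain ⟨n, hn⟩ := exists_nat_gt (t/s)
        refine ⟨n, ?_, h2⟩
        rw [div_lt_iff₀ (by positivity)]
        have h3 : t < (n:ℝ) * s := by
          have := (div_lt_iff₀ h1).1 hn
          linarith
        nlinarith
    calc (∫⁻ s in Ioc (0:ℝ) t, mu (volume.restrict (Ioo 0 1)) y s)
        ≤ ∫⁻ s in Ioc (0:ℝ) t, ENNReal.ofReal (l * Real.log (2/s)) := by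
          refine setLIntegral_mono ?_ fun s hs => ?_
          · exact (measurable_const.mul
              (Real.measurable_log.comp (measurable_const.div measurable_id))).ennreal_ofReal
          · have hs0 : 0 < s := hs.1
            have hlog1 : (0:ℝ) ≤ Real.log (1 + 1/s) := Real.log_nonneg (by
              have : (0:ℝ) < 1/s := by positivity
              linarith)
            refine le_trans (stmt6_mu_le_of_meas_le (mul_nonneg hl.le hlog1)
              (stmt6_cheb hy hl hint hs0)) ?_
            apply ENNReal.ofReal_le_ofReal
            apply mul_le_mul_of_nonneg_left _ hl.le
            apply Real.log_le_log (by positivity)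
            rw [le_div_iff₀ hs0, add_mul, one_mul, div_mul_cancel₀ _ hs0.ne']
            linarith [hs.2.trans ht1]
      _ = ⨆ n : ℕ, ∫⁻ s in Ioc (t/((n:ℝ)+2)) t, ENNReal.ofReal (l * Real.log (2/s)) := by
          rw [← hUn]
          refine stmt6_lint_union ?_ (fun n => measurableSet_Ioc) ?_
          · exact (measurable_const.mul
              (Real.measurable_log.comp (measurable_const.div measurable_id))).ennreal_ofReal
          · intro m n hmn
            apply Ioc_subset_Ioc _ le_rfl
            apply div_le_div_of_nonneg_left ht0.le (by positivity)
            have : (m:ℝ) ≤ n := Nat.cast_le.2 hmn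
            linarith
      _ ≤ ENNReal.ofReal l * ENNReal.ofReal (t * Real.log (Real.exp 2 / t)) := by
          refine iSup_le fun n => stmt6_piece_est ht0 ht1 hl (by positivity) ?_
          rw [div_le_iff₀ (by positivity)]
          nlinarith
  refine ⟨?_, hSN.trans (le_mul_of_one_le_left zero_le (by norm_num))⟩
  -- Lower bound
  by_cases hStop : S = ⊤
  · rw [hStop]; exact le_top
  have hkey : ∀ t : ℝ, 0 < t → t ≤ 1 →
      ENNReal.ofReal t * mu (volume.restrict (Ioo 0 1)) y t ≤
        S * ENNReal.ofReal (t * Real.log (Real.exp 2 / t)) := by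
    intro t ht0 ht1
    have hle : (∫⁻ s in Ioc (0:ℝ) t, mu (volume.restrict (Ioo 0 1)) y s) /
        ENNReal.ofReal (t * Real.log (Real.exp 2 / t)) ≤ S :=
      le_iSup_of_le t (le_iSup_of_le ht0 (le_iSup_of_le ht1 le_rfl))
    have h1 := (ENNReal.div_le_iff (ne_of_gt (ofReal_pos.2 (hφ t ht0 ht1)))
      ofReal_ne_top).1 hle
    refine le_trans ?_ h1
    calc ENNReal.ofReal t * mu (volume.restrict (Ioo 0 1)) y t
        = ∫⁻ _ in Ioc (0:ℝ) t, mu (volume.restrict (Ioo 0 1)) y t := by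
          rw [setLIntegral_const, Real.volume_Ioc, mul_comm]
          norm_num
      _ ≤ ∫⁻ s in Ioc (0:ℝ) t, mu (volume.restrict (Ioo 0 1)) y s :=
          setLIntegral_mono (hmono.measurable) fun s hs => hmono hs.2
  by_cases hS0 : S = 0
  · -- y = 0 a.e., norm is 0
    have hnull : ∀ b : ℝ, 0 < b → (volume.restrict (Ioo (0:ℝ) 1)) {u | b < |y u|} = 0 := by
      intro b hb
      have hmu0 : ∀ t : ℝ, 0 < t → t ≤ 1 → mu (volume.restrict (Ioo 0 1)) y t = 0 := by
        intro t ht0 ht1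
        have := hkey t ht0 ht1
        rw [hS0, zero_mul, nonpos_iff_eq_zero, mul_eq_zero] at this
        rcases this with h | h
        · exact absurd h (by simpa using ht0)
        · exact h
      have hbd : ∀ t : ℝ, 0 < t → t ≤ 1 →
          (volume.restrict (Ioo (0:ℝ) 1)) {u | b < |y u|} ≤ ENNReal.ofReal t := by
        intro t ht0 ht1
        refine stmt6_meas_le_of_mu_lt ?_
        rw [hmu0 t ht0 ht1]
        exact ofReal_pos.2 hb
      refine le_antisymm ?_ zero_le
      refine ENNReal.le_of_forall_pos_le_add fun ε hε _ => ?_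
      have hεpos : (0:ℝ) < min 1 ε := lt_min one_pos (by exact_mod_cast hε)
      calc (volume.restrict (Ioo (0:ℝ) 1)) {u | b < |y u|}
          ≤ ENNReal.ofReal (min 1 ε) := hbd _ hεpos (min_le_left _ _)
        _ ≤ ENNReal.ofReal (ε : ℝ) := ENNReal.ofReal_le_ofReal (min_le_right _ _)
        _ = 0 + (ε : ℝ≥0∞) := by rw [zero_add, ENNReal.ofReal_coe_nnreal]
    have hae : ∀ᵐ u ∂(volume.restrict (Ioo (0:ℝ) 1)), y u = 0 := by
      have h0 : (volume.restrict (Ioo (0:ℝ) 1)) {u | 0 < |y u|} = 0 := by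
        have hsub : {u : ℝ | 0 < |y u|} ⊆ ⋃ n : ℕ, {u | 1/((n:ℝ)+1) < |y u|} := by
          intro u hu
          obtain ⟨n, hn⟩ := exists_nat_gt (1/|y u|)
          refine mem_iUnion.2 ⟨n, ?_⟩
          simp only [mem_setOf_eq]
          rw [div_lt_iff₀ (by positivity)]
          have := (div_lt_iff₀ hu).1 hn
          nlinarith [abs_nonneg (y u)]
        refine measure_mono_null hsub (measure_iUnion_null fun n => hnull _ (by positivity))
      rw [ae_iff]
      refine measure_mono_null ?_ h0
      intro u hu
      simp only [mem_setOf_eq] at hu ⊢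
      exact abs_pos.2 hu
    have hNle : ∀ l : ℝ, 0 < l → expOrliczNorm y ≤ ENNReal.ofReal l := by
      intro l hl
      refine sInf_le ⟨l, ⟨hl, ?_⟩, rfl⟩
      have hz : ∫⁻ s in Ioo (0:ℝ) 1, ENNReal.ofReal (Real.exp (|y s| / l) - 1) = 0 := by
        rw [lintegral_eq_zero_iff' (by fun_prop)]
        filter_upwards [hae] with u hu
        simp [hu]
      rw [hz]
      exact zero_le_one
    have hN0 : expOrliczNorm y = 0 := by
      refine le_antisymm ?_ zero_le
      refine ENNReal.le_of_forall_pos_le_add fun ε hε _ => ?_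
      calc expOrliczNorm y ≤ ENNReal.ofReal (ε : ℝ) := hNle _ (by exact_mod_cast hε)
        _ = 0 + (ε : ℝ≥0∞) := by rw [zero_add, ENNReal.ofReal_coe_nnreal]
    rw [hN0, mul_zero]
    exact zero_le
  -- main case: 0 < S < ⊤
  set K := S.toReal with hKdef
  have hK : 0 < K := ENNReal.toReal_pos hS0 hStop
  have hSK : S = ENNReal.ofReal K := (ENNReal.ofReal_toReal hStop).symm
  have hmuK : ∀ t : ℝ, 0 < t → t ≤ 1 →
      mu (volume.restrict (Ioo 0 1)) y t ≤
        ENNReal.ofReal (K * Real.log (Real.exp 2 / t)) := by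
    intro t ht0 ht1
    have h1 := hkey t ht0 ht1
    rw [hSK, ← ENNReal.ofReal_mul (ENNReal.toReal_nonneg)] at h1
    have heq : K * (t * Real.log (Real.exp 2 / t)) = t * (K * Real.log (Real.exp 2 / t)) := by
      ring
    rw [heq, ENNReal.ofReal_mul ht0.le] at h1
    exact (ENNReal.mul_le_mul_iff_right (by simpa using ht0) ofReal_ne_top).1 h1
  have hmeas : ∀ a : ℝ, (volume.restrict (Ioo (0:ℝ) 1)) {u | a < |y u|} ≤
      ENNReal.ofReal (Real.exp 2 * Real.exp (-(a/K))) := by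
    intro a
    set c := Real.exp 2 * Real.exp (-(a/K)) with hcdef
    have hc0 : 0 < c := by positivity
    by_cases hc : 1 ≤ c
    · calc (volume.restrict (Ioo (0:ℝ) 1)) {u | a < |y u|}
          ≤ (volume.restrict (Ioo (0:ℝ) 1)) univ := measure_mono (subset_univ _)
        _ = 1 := by
            rw [Measure.restrict_apply_univ, Real.volume_Ioo]
            norm_num
        _ ≤ ENNReal.ofReal c := by
            rw [← ENNReal.ofReal_one]
            exact ENNReal.ofReal_le_ofReal hc
    · push_neg at hc
      have hlogc : Real.log c = 2 - a/K := by
        rw [hcdef, ← Real.exp_add, Real.log_exp]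
        ring
      have ha2 : 2 < a / K := by
        have := Real.log_neg hc0 hc
        rw [hlogc] at this
        linarith
      have ha0 : 0 < a := by
        have := (lt_div_iff₀ hK).1 ha2
        nlinarith
      have hbd : ∀ t : ℝ, c < t → t ≤ 1 →
          (volume.restrict (Ioo (0:ℝ) 1)) {u | a < |y u|} ≤ ENNReal.ofReal t := by
        intro t htc ht1
        have ht0 : 0 < t := hc0.trans htc
        have hlog : K * Real.log (Real.exp 2 / t) < a := by
          have hlt : Real.log c < Real.log t := Real.log_lt_log hc0 htc
          rw [hlogc] at hlt
          rw [Real.log_div (Real.exp_ne_zero 2) ht0.ne', Real.log_exp]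
          have h3 : K * (2 - Real.log t) < K * (a/K) :=
            mul_lt_mul_of_pos_left (by linarith) hK
          rwa [mul_div_cancel₀ _ hK.ne'] at h3
        refine stmt6_meas_le_of_mu_lt (lt_of_le_of_lt (hmuK t ht0 ht1) ?_)
        exact (ENNReal.ofReal_lt_ofReal_iff ha0).2 hlog
      refine ENNReal.le_of_forall_pos_le_add fun ε hε _ => ?_
      have hεr : (0:ℝ) < ε := by exact_mod_cast hε
      calc (volume.restrict (Ioo (0:ℝ) 1)) {u | a < |y u|}
          ≤ ENNReal.ofReal (min (c + ε) 1) :=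
            hbd _ (lt_min (by linarith) hc) (min_le_right _ _)
        _ ≤ ENNReal.ofReal (c + ε) := ENNReal.ofReal_le_ofReal (min_le_left _ _)
        _ ≤ ENNReal.ofReal c + ENNReal.ofReal (ε : ℝ) := ENNReal.ofReal_add_le
        _ = ENNReal.ofReal c + (ε : ℝ≥0∞) := by rw [ENNReal.ofReal_coe_nnreal]
  -- the Orlicz integral with parameter 16K is at most 1
  have hlam : (0:ℝ) < 16 * K := by positivity
  have hint : ∫⁻ s in Ioo (0:ℝ) 1,
      ENNReal.ofReal (Real.exp (|y s| / (16 * K)) - 1) ≤ 1 := by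
    have hnn : 0 ≤ᵐ[volume.restrict (Ioo (0:ℝ) 1)]
        fun s => Real.exp (|y s| / (16 * K)) - 1 := by
      refine ae_of_all _ fun s => ?_
      simp only [Pi.zero_apply]
      have : (1:ℝ) ≤ Real.exp (|y s| / (16 * K)) := by
        rw [← Real.exp_zero]
        exact Real.exp_le_exp.2 (by positivity)
      linarith
    have hlc := lintegral_eq_lintegral_meas_lt (volume.restrict (Ioo (0:ℝ) 1)) hnn
      (by fun_prop)
    rw [hlc]
    have hUn : (⋃ n : ℕ, Ioc (0:ℝ) n) = Ioi 0 := by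
      ext u
      simp only [mem_iUnion, mem_Ioc, mem_Ioi]
      constructor
      · rintro ⟨n, h1, _⟩; exact h1
      · intro h1
        obtain ⟨n, hn⟩ := exists_nat_gt u
        exact ⟨n, h1, hn.le⟩
    calc ∫⁻ u in Ioi (0:ℝ),
          (volume.restrict (Ioo (0:ℝ) 1)) {s | u < Real.exp (|y s| / (16 * K)) - 1}
        ≤ ∫⁻ u in Ioi (0:ℝ), ENNReal.ofReal (Real.exp 2 * (1+u) ^ (-16:ℝ)) := by
          refine setLIntegral_mono ?_ fun u hu => ?_
          · fun_prop
          · have hu0 : (0:ℝ) < u := hu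
            have hseteq : {s : ℝ | u < Real.exp (|y s| / (16 * K)) - 1} =
                {s : ℝ | 16 * K * Real.log (1 + u) < |y s|} := by
              ext s
              simp only [mem_setOf_eq]
              rw [show (16 * K * Real.log (1 + u) < |y s|) ↔
                  (Real.log (1 + u) < |y s| / (16 * K)) from (lt_div_iff₀' hlam).symm]
              rw [Real.log_lt_iff_lt_exp (by linarith)]
              constructor <;> intro h <;> linarith
            rw [hseteq]
            refine le_trans (hmeas _) (ENNReal.ofReal_le_ofReal ?_)
            have hexp : Real.exp (-(16 * K * Real.log (1 + u) / K)) =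
                (1+u) ^ (-16:ℝ) := by
              rw [Real.rpow_def_of_pos (by linarith : (0:ℝ) < 1 + u)]
              congr 1
              field_simp
            rw [hexp]
      _ = ⨆ n : ℕ, ∫⁻ u in Ioc (0:ℝ) n, ENNReal.ofReal (Real.exp 2 * (1+u) ^ (-16:ℝ)) := by
          rw [← hUn]
          refine stmt6_lint_union ?_ (fun n => measurableSet_Ioc) ?_
          · fun_prop
          · intro m n hmn
            exact Ioc_subset_Ioc le_rfl (by exact_mod_cast hmn)
      _ ≤ 1 := iSup_le fun n => stmt6_tail_piece
  have hN : expOrliczNorm y ≤ ENNReal.ofReal (16 * K) :=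
    sInf_le ⟨16 * K, ⟨hlam, hint⟩, rfl⟩
  have h16 : ENNReal.ofReal (16 * K) = 16 * S := by
    rw [ENNReal.ofReal_mul (by norm_num), hSK]
    norm_num
  calc (16:ℝ≥0∞)⁻¹ * expOrliczNorm y ≤ 16⁻¹ * (16 * S) := by
        rw [← h16]
        exact mul_le_mul_right hN _
    _ = S := by
        rw [← mul_assoc, ENNReal.inv_mul_cancel (by norm_num) (by norm_num), one_mul]
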